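/- Let u, v be binary words such that (u choose v) is odd, and let k satisfy 2^k > |u|. Then the pair (u 0^{2^k} 1, v 0^{2^k} 1) satisfies condition (⋆): its binomial coefficient is odd, and both (u 0^{2^k} 1 choose v 0^{2^k} 1 0) and (u 0^{2^k} 1 choose v 0^{2^k} 1 1) are zero. -/

import Mathlib

/-- The binomial coefficient of words: the number of occurrences of the second
word as a scattered subsequence of the first. -/
def wb {A : Type*} [DecidableEq A] : List A → List A → ℕ
  | _, [] => 1
  | [], _ :: _ => 0
  | a :: u, b :: v => wb u (b :: v) + (if a = b then wb u v else 0)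

lemma wb_nil_right {A : Type*} [DecidableEq A] (u : List A) : wb u [] = 1 := by
  cases u <;> rfl

lemma wb_nil_cons {A : Type*} [DecidableEq A] (b : A) (v : List A) : wb [] (b :: v) = 0 := rfl

lemma wb_cons_cons {A : Type*} [DecidableEq A] (a b : A) (u v : List A) :
    wb (a :: u) (b :: v) = wb u (b :: v) + (if a = b then wb u v else 0) := rfl

lemma wb_len {A : Type*} [DecidableEq A] : ∀ (u v : List A), u.length < v.length → wb u v = 0 := by
  intro u
  induction u with
  | nil =>
    intro v h
    cases v with
    | nil => simp at h
    | cons b v => rfl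
  | cons a u ih =>
    intro v h
    cases v with
    | nil => simp at h
    | cons b v =>
      simp only [List.length_cons, Nat.add_lt_add_iff_right] at h
      simp [wb_cons_cons, ih (b :: v) (by simpa using Nat.lt_trans h (Nat.lt_succ_self _)), ih v h]

lemma wb_concat {A : Type*} [DecidableEq A] (a b : A) : ∀ (u v : List A),
    wb (u ++ [a]) (v ++ [b]) = wb u (v ++ [b]) + if a = b then wb u v else 0 := by
  intro u
  induction u with
  | nil =>
    intro v
    cases v with
    | nil => simp [wb_cons_cons, wb_nil_right, wb_nil_cons]
    | cons d v =>
      have h0 : wb ([] : List A) (v ++ [b]) = 0 := by cases v <;> rfl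
      simp [wb_cons_cons, wb_nil_cons, h0]
  | cons c u ih =>
    intro v
    cases v with
    | nil =>
      have h1 := ih []
      simp only [List.nil_append] at h1
      simp only [List.cons_append, List.nil_append, wb_cons_cons, h1, wb_nil_right]
      split_ifs <;> omega
    | cons d v =>
      have h1 := ih (d :: v)
      have h2 := ih v
      simp only [List.cons_append] at h1
      simp only [List.cons_append, wb_cons_cons, h1, h2]
      split_ifs <;> omega

lemma wb_strip (x y : List Bool) : ∀ j,
    wb (x ++ List.replicate j false) (y ++ [true]) = wb x (y ++ [true]) := by
  intro j
  induction j with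
  | zero => simp
  | succ j ih =>
    rw [List.replicate_succ', ← List.append_assoc]
    rw [wb_concat]
    simp [ih]

lemma wb_sum (u v : List Bool) : ∀ i j, i ≤ j →
    wb (u ++ List.replicate i false) (v ++ List.replicate j false)
      = ∑ s ∈ Finset.range (i + 1), i.choose s * wb u (v ++ List.replicate (j - s) false) := by
  intro i
  induction i with
  | zero => simp
  | succ i ih =>
    intro j hij
    obtain ⟨j', rfl⟩ : ∃ j', j = j' + 1 := ⟨j - 1, by omega⟩
    rw [List.replicate_succ' (n := i), List.replicate_succ' (n := j'), ← List.append_assoc, ← List.append_assoc,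
      wb_concat]
    simp only [if_pos rfl]
    rw [List.append_assoc, ← List.replicate_succ' (n := j')]
    rw [ih (j' + 1) (by omega), ih j' (by omega)]
    rw [Finset.sum_range_succ' _ (i + 1), Finset.sum_range_succ' _ i]
    simp only [Nat.choose_succ_succ, Nat.choose_zero_right, add_mul, one_mul, Nat.succ_sub_succ]
    rw [Finset.sum_add_distrib]
    have hlast : (∑ s ∈ Finset.range i, i.choose (s + 1) * wb u (v ++ List.replicate (j' - s) false))
        = ∑ s ∈ Finset.range (i + 1), i.choose (s + 1) * wb u (v ++ List.replicate (j' - s) false) := by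
      rw [Finset.sum_range_succ, Nat.choose_succ_self, zero_mul, add_zero]
    rw [Finset.sum_range_succ']
    simp only [Nat.choose_zero_right, one_mul, Nat.succ_sub_succ, Nat.sub_zero]
    simp only [if_true, Nat.succ_eq_add_one]
    omega

lemma wb_parity (u v : List Bool) (k : ℕ) (hk : u.length < 2 ^ k) :
    wb (u ++ List.replicate (2 ^ k) false) (v ++ List.replicate (2 ^ k) false) % 2
      = wb u v % 2 := by
  rw [wb_sum u v (2 ^ k) (2 ^ k) le_rfl, Finset.sum_range_succ, Nat.choose_self, one_mul,
    Nat.sub_self]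
  simp only [List.replicate_zero, List.append_nil]
  have h2 : 2 ∣ ∑ s ∈ Finset.range (2 ^ k),
      (2 ^ k).choose s * wb u (v ++ List.replicate (2 ^ k - s) false) := by
    apply Finset.dvd_sum
    intro s hs
    rcases Nat.eq_zero_or_pos s with h0 | h0
    · subst h0
      have : wb u (v ++ List.replicate (2 ^ k) false) = 0 := wb_len _ _ (by simp; omega)
      simp [this]
    · exact Dvd.dvd.mul_right (Nat.Prime.dvd_choose_pow Nat.prime_two (by omega)
        (by have := Finset.mem_range.mp hs; omega)) _
  omega

/-- The condition (⋆). -/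
def StarCond (u v : List Bool) : Prop :=
  (u, v) ≠ ([], []) ∧ Odd (wb u v) ∧
    wb u (v ++ [false]) = 0 ∧ wb u (v ++ [true]) = 0

theorem stmt_17 (u v : List Bool) (h : Odd (wb u v)) (k : ℕ) (hk : u.length < 2 ^ k) :
    StarCond (u ++ List.replicate (2 ^ k) false ++ [true])
         (v ++ List.replicate (2 ^ k) false ++ [true]) := by
  set m := 2 ^ k with hm
  set U0 := u ++ List.replicate m false with hU0
  set V0 := v ++ List.replicate m false with hV0
  have hlenU0 : U0.length = u.length + m := by simp [hU0]
  have hlenV0 : V0.length = v.length + m := by simp [hV0]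
  -- wb U0 (V0 ++ [true]) = 0
  have key1 : wb U0 (V0 ++ [true]) = 0 := by
    rw [hU0, wb_strip, wb_len]
    simp [hV0]; omega
  -- wb U0 ((V0 ++ [true]) ++ [true]) = 0
  have key2 : wb U0 ((V0 ++ [true]) ++ [true]) = 0 := by
    rw [hU0, wb_strip, wb_len]
    simp [hV0]; omega
  -- wb (u ++ replicate j false) ((V0 ++ [true]) ++ [false]) = 0
  have key3 : ∀ j, wb (u ++ List.replicate j false) ((V0 ++ [true]) ++ [false]) = 0 := by
    intro j
    induction j with
    | zero =>
      simp only [List.replicate_zero, List.append_nil]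
      rw [wb_len]
      simp [hV0]; omega
    | succ j ih =>
      rw [List.replicate_succ', ← List.append_assoc, wb_concat, ih]
      have : wb (u ++ List.replicate j false) (V0 ++ [true]) = 0 := by
        rw [wb_strip, wb_len]
        simp [hV0]; omega
      simp [this]
  refine ⟨by simp, ?_, ?_, ?_⟩
  · rw [wb_concat, key1, if_pos rfl, zero_add]
    rw [Nat.odd_iff, hU0, hV0, hm, wb_parity u v k (by omega), ← Nat.odd_iff]
    exact h
  · rw [show (v ++ List.replicate m false ++ [true]) ++ [false]
        = (V0 ++ [true]) ++ [false] by rw [hV0],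
      show u ++ List.replicate m false ++ [true] = U0 ++ [true] by rw [hU0],
      wb_concat]
    simp only [hU0, key3 m]
    simp
  · rw [show (v ++ List.replicate m false ++ [true]) ++ [true]
        = (V0 ++ [true]) ++ [true] by rw [hV0],
      show u ++ List.replicate m false ++ [true] = U0 ++ [true] by rw [hU0],
      wb_concat]
    rw [key2, key1]
    simp
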